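/- There is no quadratic map V(f)ₖ = aₖf₁² + bₖf₂² + cₖf₃² + αₖf₁f₂ + βₖf₂f₃ + γₖf₁f₃ on ℝ³ mapping the unit sphere into itself such that the associated linear map Δ on M₂(ℂ) defined by Δ(w₀I + w·σ) = w₀(I⊗I) + Σ_{m,l}⟨b_{ml}, w⟩σₘ⊗σₗ (with b₍₁₁₎ = a, b₍₂₂₎ = b, b₍₃₃₎ = c, b₍₁₂₎ = b₍₂₁₎ = A/2, b₍₂₃₎ = b₍₃₂₎ = B/2, b₍₁₃₎ = b₍₃₁₎ = Γ/2) is positive. In other words, a q-pure symmetric quasi quantum quadratic operator with Haar state τ is never a positive map. -/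

import Mathlib

open Matrix Complex
open scoped ComplexOrder

noncomputable def sigma1 : Matrix (Fin 2) (Fin 2) ℂ := !![0, 1; 1, 0]
noncomputable def sigma2 : Matrix (Fin 2) (Fin 2) ℂ := !![0, -I; I, 0]
noncomputable def sigma3 : Matrix (Fin 2) (Fin 2) ℂ := !![1, 0; 0, -1]

noncomputable def pauli (w : Fin 3 → ℂ) : Matrix (Fin 2) (Fin 2) ℂ :=
  w 0 • sigma1 + w 1 • sigma2 + w 2 • sigma3

open Kronecker

noncomputable def sigma : Fin 3 → Matrix (Fin 2) (Fin 2) ℂ := ![sigma1, sigma2, sigma3]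

/-- The coefficient vectors `b_{ml}` built from `a, b, c, A, B, Γ`:
`b₁₁ = a, b₂₂ = b, b₃₃ = c, b₁₂ = b₂₁ = A/2, b₂₃ = b₃₂ = B/2, b₁₃ = b₃₁ = Γ/2`. -/
noncomputable def bmlOf (a b c A B Γ : Fin 3 → ℝ) : Fin 3 → Fin 3 → Fin 3 → ℝ :=
  ![![a, fun i => A i / 2, fun i => Γ i / 2],
    ![fun i => A i / 2, b, fun i => B i / 2],
    ![fun i => Γ i / 2, fun i => B i / 2, c]]

/-- The symmetric quasi q.q.o. with Haar state `τ`: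
`Δ(w₀ I + w·σ) = w₀ (I⊗I) + ∑_{m,l} ⟨b_{ml}, w⟩ σₘ ⊗ σₗ` (on self-adjoint elements,
i.e. real `w₀, w`). -/
noncomputable def DeltaOf (a b c A B Γ : Fin 3 → ℝ) (w₀ : ℝ) (w : Fin 3 → ℝ) :
    Matrix (Fin 2 × Fin 2) (Fin 2 × Fin 2) ℂ :=
  (w₀ : ℂ) • ((1 : Matrix (Fin 2) (Fin 2) ℂ) ⊗ₖ (1 : Matrix (Fin 2) (Fin 2) ℂ))
    + ∑ m, ∑ l, ((∑ j, bmlOf a b c A B Γ m l j * w j : ℝ) : ℂ) • (sigma m ⊗ₖ sigma l)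

lemma sum_two {α : Type*} [Fintype α] [DecidableEq α] (p q : α) (hpq : p ≠ q) (s t : ℂ)
    (g : α → ℂ) :
    ∑ r, (if r = p then s else if r = q then t else 0) * g r = s * g p + t * g q := by
  have key : ∀ r, (if r = p then s else if r = q then t else 0) * g r
      = (if r = p then s * g p else 0) + (if r = q then t * g q else 0) := by
    intro r; by_cases h1 : r = p <;> by_cases h2 : r = q <;> simp_all
  simp only [key, Finset.sum_add_distrib, Finset.sum_ite_eq', Finset.mem_univ, if_true]

lemma sum_two' {α : Type*} [Fintype α] [DecidableEq α] (p q : α) (hpq : p ≠ q) (s t : ℂ)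
    (g : α → ℂ) :
    ∑ r, g r * (if r = p then s else if r = q then t else 0) = g p * s + g q * t := by
  have key : ∀ r, g r * (if r = p then s else if r = q then t else 0)
      = (if r = p then g p * s else 0) + (if r = q then g q * t else 0) := by
    intro r; by_cases h1 : r = p <;> by_cases h2 : r = q <;> simp_all
  simp only [key, Finset.sum_add_distrib, Finset.sum_ite_eq', Finset.mem_univ, if_true]

lemma quadform (s t : ℂ) (p q : Fin 2 × Fin 2) (hpq : p ≠ q)
    (M : Matrix (Fin 2 × Fin 2) (Fin 2 × Fin 2) ℂ) :
    star (fun r => if r = p then s else if r = q then t else 0) ⬝ᵥ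
      M *ᵥ (fun r => if r = p then s else if r = q then t else 0)
    = starRingEnd ℂ s * s * M p p + starRingEnd ℂ s * t * M p q
      + starRingEnd ℂ t * s * M q p + starRingEnd ℂ t * t * M q q := by
  have hstar : star (fun r : Fin 2 × Fin 2 => if r = p then s else if r = q then t else 0)
      = fun r => if r = p then starRingEnd ℂ s else if r = q then starRingEnd ℂ t else 0 := by
    funext r; by_cases h1 : r = p <;> by_cases h2 : r = q <;> simp_all
  rw [hstar]
  simp only [dotProduct, mulVec]
  rw [sum_two p q hpq]
  rw [sum_two' p q hpq s t (M p ·), sum_two' p q hpq s t (M q ·)]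
  ring

lemma bell_ineqs (a b c A B Γ : Fin 3 → ℝ) (w₀ : ℝ) (w : Fin 3 → ℝ)
    (h : (DeltaOf a b c A B Γ w₀ w).PosSemidef) :
    0 ≤ w₀ - (a 0*w 0+a 1*w 1+a 2*w 2) - (b 0*w 0+b 1*w 1+b 2*w 2) - (c 0*w 0+c 1*w 1+c 2*w 2)
    ∧ 0 ≤ w₀ - (a 0*w 0+a 1*w 1+a 2*w 2) + (b 0*w 0+b 1*w 1+b 2*w 2) + (c 0*w 0+c 1*w 1+c 2*w 2)
    ∧ 0 ≤ w₀ + (a 0*w 0+a 1*w 1+a 2*w 2) - (b 0*w 0+b 1*w 1+b 2*w 2) + (c 0*w 0+c 1*w 1+c 2*w 2)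
    ∧ 0 ≤ w₀ + (a 0*w 0+a 1*w 1+a 2*w 2) + (b 0*w 0+b 1*w 1+b 2*w 2) - (c 0*w 0+c 1*w 1+c 2*w 2)
    := by
  have main : ∀ (s t : ℂ) (p q : Fin 2 × Fin 2), p ≠ q → ∀ E : ℝ,
      (starRingEnd ℂ s * s * (DeltaOf a b c A B Γ w₀ w) p p
        + starRingEnd ℂ s * t * (DeltaOf a b c A B Γ w₀ w) p q
        + starRingEnd ℂ t * s * (DeltaOf a b c A B Γ w₀ w) q p
        + starRingEnd ℂ t * t * (DeltaOf a b c A B Γ w₀ w) q q = ((E : ℝ) : ℂ)) → 0 ≤ E := by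
    intro s t p q hpq E hE
    have h2 := h.dotProduct_mulVec_nonneg (fun r => if r = p then s else if r = q then t else 0)
    rw [quadform s t p q hpq, hE, show (0:ℂ) = ((0:ℝ):ℂ) from rfl, Complex.real_le_real] at h2
    exact h2
  refine ⟨?_, ?_, ?_, ?_⟩
  · have := main 1 (-1) (0,1) (1,0) (by decide)
      (2*(w₀ - (a 0*w 0+a 1*w 1+a 2*w 2) - (b 0*w 0+b 1*w 1+b 2*w 2) - (c 0*w 0+c 1*w 1+c 2*w 2)))
      (by
        simp only [DeltaOf, Matrix.add_apply, Matrix.smul_apply, Matrix.sum_apply,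
          Fin.sum_univ_three, kroneckerMap_apply, Matrix.one_apply, sigma, bmlOf,
          Matrix.cons_val_zero, Matrix.cons_val_one, Matrix.head_cons, sigma1, sigma2, sigma3,
          Matrix.cons_val', Matrix.empty_val', Matrix.cons_val_fin_one, Matrix.of_apply, Matrix.cons_val_two, Matrix.tail_cons]
        norm_num
        try push_cast
        try ring_nf
        try simp only [Complex.I_sq]
        try push_cast
        try ring)
    linarith
  · have := main 1 (-1) (0,0) (1,1) (by decide)
      (2*(w₀ - (a 0*w 0+a 1*w 1+a 2*w 2) + (b 0*w 0+b 1*w 1+b 2*w 2) + (c 0*w 0+c 1*w 1+c 2*w 2)))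
      (by
        simp only [DeltaOf, Matrix.add_apply, Matrix.smul_apply, Matrix.sum_apply,
          Fin.sum_univ_three, kroneckerMap_apply, Matrix.one_apply, sigma, bmlOf,
          Matrix.cons_val_zero, Matrix.cons_val_one, Matrix.head_cons, sigma1, sigma2, sigma3,
          Matrix.cons_val', Matrix.empty_val', Matrix.cons_val_fin_one, Matrix.of_apply, Matrix.cons_val_two, Matrix.tail_cons]
        norm_num
        try push_cast
        try ring_nf
        try simp only [Complex.I_sq]
        try push_cast
        try ring)
    linarith
  · have := main 1 1 (0,0) (1,1) (by decide)
      (2*(w₀ + (a 0*w 0+a 1*w 1+a 2*w 2) - (b 0*w 0+b 1*w 1+b 2*w 2) + (c 0*w 0+c 1*w 1+c 2*w 2)))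
      (by
        simp only [DeltaOf, Matrix.add_apply, Matrix.smul_apply, Matrix.sum_apply,
          Fin.sum_univ_three, kroneckerMap_apply, Matrix.one_apply, sigma, bmlOf,
          Matrix.cons_val_zero, Matrix.cons_val_one, Matrix.head_cons, sigma1, sigma2, sigma3,
          Matrix.cons_val', Matrix.empty_val', Matrix.cons_val_fin_one, Matrix.of_apply, Matrix.cons_val_two, Matrix.tail_cons]
        norm_num
        try push_cast
        try ring_nf
        try simp only [Complex.I_sq]
        try push_cast
        try ring)
    linarith
  · have := main 1 1 (0,1) (1,0) (by decide)
      (2*(w₀ + (a 0*w 0+a 1*w 1+a 2*w 2) + (b 0*w 0+b 1*w 1+b 2*w 2) - (c 0*w 0+c 1*w 1+c 2*w 2)))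
      (by
        simp only [DeltaOf, Matrix.add_apply, Matrix.smul_apply, Matrix.sum_apply,
          Fin.sum_univ_three, kroneckerMap_apply, Matrix.one_apply, sigma, bmlOf,
          Matrix.cons_val_zero, Matrix.cons_val_one, Matrix.head_cons, sigma1, sigma2, sigma3,
          Matrix.cons_val', Matrix.empty_val', Matrix.cons_val_fin_one, Matrix.of_apply, Matrix.cons_val_two, Matrix.tail_cons]
        norm_num
        try push_cast
        try ring_nf
        try simp only [Complex.I_sq]
        try push_cast
        try ring)
    linarith

lemma one_add_pauli_psd (w : Fin 3 → ℝ) (hw : w 0^2 + w 1^2 + w 2^2 = 1) :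
    (((1:ℝ):ℂ) • (1 : Matrix (Fin 2) (Fin 2) ℂ) + pauli (fun i => (w i : ℂ))).PosSemidef := by
  set N : Matrix (Fin 2) (Fin 2) ℂ :=
    ((1:ℝ):ℂ) • (1 : Matrix (Fin 2) (Fin 2) ℂ) + pauli (fun i => (w i : ℂ)) with hN
  have hw' : (w 0:ℂ)^2 + (w 1:ℂ)^2 + (w 2:ℂ)^2 = 1 := by
    exact_mod_cast congrArg (fun x : ℝ => (x:ℂ)) hw
  have hherm : Nᴴ = N := by
    ext i j
    fin_cases i <;> fin_cases j <;>
      simp [hN, pauli, sigma1, sigma2, sigma3, conjTranspose_apply, Matrix.one_apply,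
        Matrix.add_apply, Matrix.smul_apply]
  have hsq : Nᴴ * N = (2:ℂ) • N := by
    rw [hherm]
    ext i j
    fin_cases i <;> fin_cases j <;>
      · simp [hN, pauli, sigma1, sigma2, sigma3, Matrix.mul_apply, Fin.sum_univ_two,
          Matrix.one_apply, Matrix.add_apply, Matrix.smul_apply]
        try ring_nf
        try simp only [Complex.I_sq]
        try linear_combination hw'
  refine Matrix.PosSemidef.of_dotProduct_mulVec_nonneg ?_ ?_
  · exact hherm
  · intro x
    have h2 := (posSemidef_conjTranspose_mul_self N).dotProduct_mulVec_nonneg x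
    rw [hsq, smul_mulVec, dotProduct_smul] at h2
    rw [Complex.le_def] at h2 ⊢
    constructor
    · have := h2.1
      simp [Complex.mul_re] at this ⊢
      linarith
    · have := h2.2
      simp [Complex.mul_im] at this ⊢
      tauto

set_option maxHeartbeats 1000000 in
theorem stmt_18 :
    ¬ ∃ a b c A B Γ : Fin 3 → ℝ,
      -- the associated quadratic operator `V` maps the unit sphere into itself (q-purity)
      (∀ f : Fin 3 → ℝ, f 0 ^ 2 + f 1 ^ 2 + f 2 ^ 2 = 1 →
        ∑ k, (a k * f 0 ^ 2 + b k * f 1 ^ 2 + c k * f 2 ^ 2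
            + A k * f 0 * f 1 + B k * f 1 * f 2 + Γ k * f 0 * f 2) ^ 2 = 1) ∧
      -- and `Δ` is a positive map
      (∀ (w₀ : ℝ) (w : Fin 3 → ℝ),
        ((w₀ : ℂ) • (1 : Matrix (Fin 2) (Fin 2) ℂ) + pauli (fun i => (w i : ℂ))).PosSemidef →
          (DeltaOf a b c A B Γ w₀ w).PosSemidef) := by
  rintro ⟨a, b, c, A, B, Γ, h1, hpos⟩
  -- homogenized sphere identity
  have hS : ∀ x y z : ℝ,
      (a 0 * x ^ 2 + b 0 * y ^ 2 + c 0 * z ^ 2 + A 0 * x * y + B 0 * y * z + Γ 0 * x * z) ^ 2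
      + (a 1 * x ^ 2 + b 1 * y ^ 2 + c 1 * z ^ 2 + A 1 * x * y + B 1 * y * z + Γ 1 * x * z) ^ 2
      + (a 2 * x ^ 2 + b 2 * y ^ 2 + c 2 * z ^ 2 + A 2 * x * y + B 2 * y * z + Γ 2 * x * z) ^ 2
      = (x ^ 2 + y ^ 2 + z ^ 2) ^ 2 := by
    intro x y z
    by_cases h0 : x ^ 2 + y ^ 2 + z ^ 2 = 0
    · have hx : x = 0 := by nlinarith [sq_nonneg x, sq_nonneg y, sq_nonneg z]
      have hy : y = 0 := by nlinarith [sq_nonneg x, sq_nonneg y, sq_nonneg z]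
      have hz : z = 0 := by nlinarith [sq_nonneg x, sq_nonneg y, sq_nonneg z]
      subst hx; subst hy; subst hz; ring
    · have hposr : 0 < x ^ 2 + y ^ 2 + z ^ 2 := by
        rcases lt_or_eq_of_le (by positivity : (0:ℝ) ≤ x ^ 2 + y ^ 2 + z ^ 2) with h | h
        · exact h
        · exact absurd h.symm h0
      set r : ℝ := Real.sqrt (x ^ 2 + y ^ 2 + z ^ 2) with hr
      have hrpos : 0 < r := Real.sqrt_pos.mpr hposr
      have hr2 : r ^ 2 = x ^ 2 + y ^ 2 + z ^ 2 := Real.sq_sqrt hposr.le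
      have hrne : r ≠ 0 := ne_of_gt hrpos
      have happ := h1 ![x / r, y / r, z / r] (by
        simp only [Matrix.cons_val_zero, Matrix.cons_val_one, Matrix.head_cons,
          Matrix.cons_val_two, Matrix.tail_cons]
        field_simp
        linarith [hr2])
      simp only [Matrix.cons_val_zero, Matrix.cons_val_one, Matrix.head_cons,
        Matrix.cons_val_two, Matrix.tail_cons] at happ
      have comp : ∀ k, (a k * (x / r) ^ 2 + b k * (y / r) ^ 2 + c k * (z / r) ^ 2
          + A k * (x / r) * (y / r) + B k * (y / r) * (z / r) + Γ k * (x / r) * (z / r)) ^ 2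
          = (a k * x ^ 2 + b k * y ^ 2 + c k * z ^ 2
              + A k * x * y + B k * y * z + Γ k * x * z) ^ 2 / r ^ 4 := by
        intro k; field_simp
      rw [Finset.sum_congr rfl (fun k _ => comp k), ← Finset.sum_div,
        div_eq_one_iff_eq (by positivity)] at happ
      simp only [Fin.sum_univ_three] at happ
      have hr4 : r ^ 4 = (x ^ 2 + y ^ 2 + z ^ 2) ^ 2 := by rw [← hr2]; ring
      linear_combination happ + hr4
  -- norms
  have haa : a 0 ^ 2 + a 1 ^ 2 + a 2 ^ 2 = 1 := by linear_combination hS 1 0 0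
  have hbb : b 0 ^ 2 + b 1 ^ 2 + b 2 ^ 2 = 1 := by linear_combination hS 0 1 0
  have hcc : c 0 ^ 2 + c 1 ^ 2 + c 2 ^ 2 = 1 := by linear_combination hS 0 0 1
  -- mixed identities
  have hAA2 : A 0 ^ 2 + A 1 ^ 2 + A 2 ^ 2 = 2 - 2*(a 0*b 0 + a 1*b 1 + a 2*b 2) := by
    linear_combination (1/2)*hS 1 1 0 + (1/2)*hS 1 (-1) 0 - hS 1 0 0 - hS 0 1 0
  have haAbA : (a 0*A 0 + a 1*A 1 + a 2*A 2) + (b 0*A 0 + b 1*A 1 + b 2*A 2) = 0 := by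
    linear_combination (1/4)*hS 1 1 0 - (1/4)*hS 1 (-1) 0
  have hbigA : 16*(a 0*A 0 + a 1*A 1 + a 2*A 2) + 4*(b 0*A 0 + b 1*A 1 + b 2*A 2) = 0 := by
    linear_combination hS 2 1 0 - 16*hS 1 0 0 - hS 0 1 0 - 4*hAA2
  have haA : a 0*A 0 + a 1*A 1 + a 2*A 2 = 0 := by linarith
  have hbA : b 0*A 0 + b 1*A 1 + b 2*A 2 = 0 := by linarith
  have hBB2 : B 0 ^ 2 + B 1 ^ 2 + B 2 ^ 2 = 2 - 2*(b 0*c 0 + b 1*c 1 + b 2*c 2) := by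
    linear_combination (1/2)*hS 0 1 1 + (1/2)*hS 0 1 (-1) - hS 0 1 0 - hS 0 0 1
  have hbBcB : (b 0*B 0 + b 1*B 1 + b 2*B 2) + (c 0*B 0 + c 1*B 1 + c 2*B 2) = 0 := by
    linear_combination (1/4)*hS 0 1 1 - (1/4)*hS 0 1 (-1)
  have hbigB : 16*(b 0*B 0 + b 1*B 1 + b 2*B 2) + 4*(c 0*B 0 + c 1*B 1 + c 2*B 2) = 0 := by
    linear_combination hS 0 2 1 - 16*hS 0 1 0 - hS 0 0 1 - 4*hBB2
  have hbB : b 0*B 0 + b 1*B 1 + b 2*B 2 = 0 := by linarith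
  have hcB : c 0*B 0 + c 1*B 1 + c 2*B 2 = 0 := by linarith
  have hGG2 : Γ 0 ^ 2 + Γ 1 ^ 2 + Γ 2 ^ 2 = 2 - 2*(a 0*c 0 + a 1*c 1 + a 2*c 2) := by
    linear_combination (1/2)*hS 1 0 1 + (1/2)*hS 1 0 (-1) - hS 1 0 0 - hS 0 0 1
  have haGcG : (a 0*Γ 0 + a 1*Γ 1 + a 2*Γ 2) + (c 0*Γ 0 + c 1*Γ 1 + c 2*Γ 2) = 0 := by
    linear_combination (1/4)*hS 1 0 1 - (1/4)*hS 1 0 (-1)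
  have hbigG : 16*(a 0*Γ 0 + a 1*Γ 1 + a 2*Γ 2) + 4*(c 0*Γ 0 + c 1*Γ 1 + c 2*Γ 2) = 0 := by
    linear_combination hS 2 0 1 - 16*hS 1 0 0 - hS 0 0 1 - 4*hGG2
  have haG : a 0*Γ 0 + a 1*Γ 1 + a 2*Γ 2 = 0 := by linarith
  have htriple : (c 0*A 0 + c 1*A 1 + c 2*A 2) + (B 0*Γ 0 + B 1*Γ 1 + B 2*Γ 2) = 0 := by
    linear_combination (1/8)*(hS 1 1 1 + hS 1 1 (-1) - hS 1 (-1) 1 - hS 1 (-1) (-1))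
      - haA - hbA
  -- positivity applied at w = a, b, c
  have hPa := bell_ineqs a b c A B Γ 1 a (hpos 1 a (one_add_pauli_psd a haa))
  have hPb := bell_ineqs a b c A B Γ 1 b (hpos 1 b (one_add_pauli_psd b hbb))
  have hPc := bell_ineqs a b c A B Γ 1 c (hpos 1 c (one_add_pauli_psd c hcc))
  obtain ⟨pa1, pa2, -, -⟩ := hPa
  obtain ⟨pb1, -, pb3, -⟩ := hPb
  obtain ⟨pc1, -, -, pc4⟩ := hPc
  have haa2 : a 0*a 0 + a 1*a 1 + a 2*a 2 = 1 := by linear_combination haa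
  have hbb2 : b 0*b 0 + b 1*b 1 + b 2*b 2 = 1 := by linear_combination hbb
  have hcc2 : c 0*c 0 + c 1*c 1 + c 2*c 2 = 1 := by linear_combination hcc
  have s1 : (b 0*a 0 + b 1*a 1 + b 2*a 2) + (c 0*a 0 + c 1*a 1 + c 2*a 2) = 0 := by linarith
  have s2 : (a 0*b 0 + a 1*b 1 + a 2*b 2) + (c 0*b 0 + c 1*b 1 + c 2*b 2) = 0 := by linarith
  have s3 : (a 0*c 0 + a 1*c 1 + a 2*c 2) + (b 0*c 0 + b 1*c 1 + b 2*c 2) = 0 := by linarith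
  have hab : a 0*b 0 + a 1*b 1 + a 2*b 2 = 0 := by linear_combination (1/2)*(s1 + s2 - s3)
  have hac : a 0*c 0 + a 1*c 1 + a 2*c 2 = 0 := by linear_combination (1/2)*(s1 - s2 + s3)
  have hbc : b 0*c 0 + b 1*c 1 + b 2*c 2 = 0 := by linear_combination (1/2)*(-s1 + s2 + s3)
  -- Parseval: a, b, c form an orthonormal basis
  set P : Matrix (Fin 3) (Fin 3) ℝ := Matrix.of ![a, b, c] with hPdef
  have hP1 : P * Pᵀ = 1 := by
    ext i j
    fin_cases i <;> fin_cases j <;>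
      (rw [Matrix.mul_apply]
       norm_num [hPdef, Fin.sum_univ_three, Matrix.transpose_apply, Matrix.one_apply,
         Matrix.vecHead, Matrix.vecTail, Fin.ext_iff]
       first
        | linear_combination haa
        | linear_combination hbb
        | linear_combination hcc
        | linear_combination hab
        | linear_combination hac
        | linear_combination hbc)
  have hP2 : Pᵀ * P = 1 := mul_eq_one_comm.mp hP1
  have e : ∀ i j : Fin 3, a i * a j + b i * b j + c i * c j
      = (1 : Matrix (Fin 3) (Fin 3) ℝ) i j := by
    intro i j
    have h := congrFun (congrFun hP2 i) j
    simpa [hPdef, Matrix.mul_apply, Fin.sum_univ_three, Matrix.transpose_apply] using h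
  have f00 : a 0*a 0 + b 0*b 0 + c 0*c 0 = 1 := by simpa [Matrix.one_apply] using e 0 0
  have f01 : a 0*a 1 + b 0*b 1 + c 0*c 1 = 0 := by simpa [Matrix.one_apply] using e 0 1
  have f02 : a 0*a 2 + b 0*b 2 + c 0*c 2 = 0 := by simpa [Matrix.one_apply] using e 0 2
  have f10 : a 1*a 0 + b 1*b 0 + c 1*c 0 = 0 := by simpa [Matrix.one_apply] using e 1 0
  have f11 : a 1*a 1 + b 1*b 1 + c 1*c 1 = 1 := by simpa [Matrix.one_apply] using e 1 1
  have f12 : a 1*a 2 + b 1*b 2 + c 1*c 2 = 0 := by simpa [Matrix.one_apply] using e 1 2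
  have f20 : a 2*a 0 + b 2*b 0 + c 2*c 0 = 0 := by simpa [Matrix.one_apply] using e 2 0
  have f21 : a 2*a 1 + b 2*b 1 + c 2*c 1 = 0 := by simpa [Matrix.one_apply] using e 2 1
  have f22 : a 2*a 2 + b 2*b 2 + c 2*c 2 = 1 := by simpa [Matrix.one_apply] using e 2 2
  have keyBG : B 0*Γ 0 + B 1*Γ 1 + B 2*Γ 2
      = (a 0*B 0 + a 1*B 1 + a 2*B 2)*(a 0*Γ 0 + a 1*Γ 1 + a 2*Γ 2)
      + (b 0*B 0 + b 1*B 1 + b 2*B 2)*(b 0*Γ 0 + b 1*Γ 1 + b 2*Γ 2)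
      + (c 0*B 0 + c 1*B 1 + c 2*B 2)*(c 0*Γ 0 + c 1*Γ 1 + c 2*Γ 2) := by
    linear_combination (-(B 0*Γ 0))*f00 - (B 0*Γ 1)*f01 - (B 0*Γ 2)*f02
      - (B 1*Γ 0)*f10 - (B 1*Γ 1)*f11 - (B 1*Γ 2)*f12
      - (B 2*Γ 0)*f20 - (B 2*Γ 1)*f21 - (B 2*Γ 2)*f22
  have keyAA : A 0*A 0 + A 1*A 1 + A 2*A 2
      = (a 0*A 0 + a 1*A 1 + a 2*A 2)^2 + (b 0*A 0 + b 1*A 1 + b 2*A 2)^2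
      + (c 0*A 0 + c 1*A 1 + c 2*A 2)^2 := by
    linear_combination (-(A 0*A 0))*f00 - (A 0*A 1)*f01 - (A 0*A 2)*f02
      - (A 1*A 0)*f10 - (A 1*A 1)*f11 - (A 1*A 2)*f12
      - (A 2*A 0)*f20 - (A 2*A 1)*f21 - (A 2*A 2)*f22
  have hBG : B 0*Γ 0 + B 1*Γ 1 + B 2*Γ 2 = 0 := by
    linear_combination keyBG + (a 0*B 0 + a 1*B 1 + a 2*B 2)*haG
      + (b 0*Γ 0 + b 1*Γ 1 + b 2*Γ 2)*hbB + (c 0*Γ 0 + c 1*Γ 1 + c 2*Γ 2)*hcB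
  have hcA : c 0*A 0 + c 1*A 1 + c 2*A 2 = 0 := by linear_combination htriple - hBG
  have hAA0 : A 0 ^ 2 + A 1 ^ 2 + A 2 ^ 2 = 0 := by
    linear_combination keyAA + (a 0*A 0 + a 1*A 1 + a 2*A 2)*haA
      + (b 0*A 0 + b 1*A 1 + b 2*A 2)*hbA + (c 0*A 0 + c 1*A 1 + c 2*A 2)*hcA
  linarith [hAA2, hAA0, hab]
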